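/- If G is a recursively partitionable graph, S ⊆ V(G), and k ≥ 2, then |S| + (|V(G)| mod k)/(k−1) ≥ (1/(k−1)) Σ_C (|V(C)| mod k), where the sum ranges over components C of G−S. -/

import Mathlib

open Finset

/-- `G.IsRP A` : the subgraph of `G` induced by the vertex set `A` is recursively
partitionable (RP): either `|A| = 1`, or `G[A]` is connected and for every integer partition
`a₁, …, a_k` (with `k ≥ 2`) of `|A|` there is a partition of `A` into parts of exactly these
sizes, each of which again induces an RP subgraph.  (The guard `B.card < A.card` is
automatically satisfied by every part of such a partition; it is only needed for
well-foundedness of the recursion.) -/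
def SimpleGraph.IsRP {V : Type} [DecidableEq V] (G : SimpleGraph V) (A : Finset V) : Prop :=
  A.card = 1 ∨ ((G.induce (A : Set V)).Connected ∧
    ∀ l : List ℕ, (∀ a ∈ l, 0 < a) → 2 ≤ l.length → l.sum = A.card →
      ∃ P : List (Finset V), P.map Finset.card = l ∧ P.Pairwise _root_.Disjoint ∧
        P.foldr (· ∪ ·) ∅ = A ∧ ∀ B ∈ P, ∀ _ : B.card < A.card, G.IsRP B)
termination_by A.card

lemma reach_mono {V : Type} (G : SimpleGraph V) {s t : Set V} (hst : s ⊆ t) {x y : ↥s}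
    (h : (G.induce s).Reachable x y) :
    (G.induce t).Reachable ⟨x.1, hst x.2⟩ ⟨y.1, hst y.2⟩ :=
  h.map ⟨Set.inclusion hst, fun {_ _} hab => hab⟩

lemma mem_foldr_union {V : Type} [DecidableEq V] {v : V} (P : List (Finset V)) :
    v ∈ P.foldr (· ∪ ·) ∅ ↔ ∃ B ∈ P, v ∈ B := by
  induction P with
  | nil => simp
  | cons B P ih => simp [ih]

lemma connected_of_isRP {V : Type} [DecidableEq V] {G : SimpleGraph V} {A : Finset V}
    (h : G.IsRP A) : (G.induce (A : Set V)).Connected := by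
  rw [SimpleGraph.IsRP] at h
  rcases h with h1 | ⟨hc, _⟩
  · obtain ⟨a, rfl⟩ := Finset.card_eq_one.mp h1
    haveI : Nonempty (↑(({a} : Finset V) : Set V)) := ⟨⟨a, by simp⟩⟩
    constructor
    intro x y
    have hx := x.2
    have hy := y.2
    simp only [Finset.coe_singleton, Set.mem_singleton_iff] at hx hy
    have : x = y := Subtype.ext (hx.trans hy.symm)
    rw [this]
  · exact hc

/-- If `G` is a recursively partitionable graph, `S ⊆ V(G)` and `k ≥ 2`, then
`|S| + (|V(G)| mod k)/(k−1) ≥ (1/(k−1)) · Σ_C (|V(C)| mod k)`, the sum ranging over the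
connected components `C` of `G − S`. -/
theorem modcut_of_isRP {V : Type} [Fintype V] [DecidableEq V]
    (G : SimpleGraph V) (hG : G.IsRP Finset.univ) (S : Finset V) (k : ℕ) (hk : 2 ≤ k) :
    (1 / ((k : ℚ) - 1)) *
        ∑ᶠ C : (G.induce ((↑S : Set V)ᶜ)).ConnectedComponent,
          ((Nat.card C.supp % k : ℕ) : ℚ) ≤
      (S.card : ℚ) + ((Fintype.card V % k : ℕ) : ℚ) / ((k : ℚ) - 1) := by
  classical
  set H := G.induce ((↑S : Set V)ᶜ) with hH
  set n := Fintype.card V with hn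
  set r := n % k with hrdef
  letI : Fintype H.ConnectedComponent := Fintype.ofFinite _
  set T : H.ConnectedComponent → Finset V :=
    fun C => Finset.univ.filter
      (fun v => ∃ h : v ∈ ((↑S : Set V)ᶜ), H.connectedComponentMk ⟨v, h⟩ = C) with hT
  have hmemT : ∀ (v : V) (C : H.ConnectedComponent),
      v ∈ T C ↔ ∃ h : v ∈ ((↑S : Set V)ᶜ), H.connectedComponentMk ⟨v, h⟩ = C := by
    intro v C; simp [hT]
  have hTdisj : ∀ (C D : H.ConnectedComponent), C ≠ D → Disjoint (T C) (T D) := by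
    intro C D hCD
    rw [Finset.disjoint_left]
    intro v hvC hvD
    obtain ⟨h1, h2⟩ := (hmemT v C).mp hvC
    obtain ⟨h1', h2'⟩ := (hmemT v D).mp hvD
    exact hCD (h2 ▸ h2' ▸ rfl)
  have hTS : ∀ (v : V) (C : H.ConnectedComponent), v ∈ T C → v ∉ S := by
    intro v C hv
    obtain ⟨h1, _⟩ := (hmemT v C).mp hv
    simpa using h1
  have hbiU : (Finset.univ.biUnion T) = Finset.univ \ S := by
    ext v
    simp only [Finset.mem_biUnion, Finset.mem_univ, true_and, Finset.mem_sdiff]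
    constructor
    · rintro ⟨C, hC⟩
      exact hTS v C hC
    · intro hv
      have hv' : v ∈ ((↑S : Set V)ᶜ) := by simpa using hv
      exact ⟨H.connectedComponentMk ⟨v, hv'⟩, (hmemT v _).mpr ⟨hv', rfl⟩⟩
  have hTsum : (∑ C : H.ConnectedComponent, (T C).card) + S.card = n := by
    rw [← Finset.card_biUnion (fun C _ D _ h => hTdisj C D h), hbiU,
      Finset.card_sdiff_of_subset (Finset.subset_univ S)]
    rw [Nat.sub_add_cancel (Finset.card_le_card (Finset.subset_univ S))]
    simp [hn]
  have hmodle : (∑ C : H.ConnectedComponent, ((T C).card % k))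
      ≤ ∑ C : H.ConnectedComponent, (T C).card :=
    Finset.sum_le_sum (fun C _ => Nat.mod_le _ _)
  have hcard : ∀ C : H.ConnectedComponent, Nat.card C.supp = (T C).card := by
    intro C
    have himg : Subtype.val '' C.supp = (↑(T C) : Set V) := by
      ext v
      simp only [Set.mem_image, SimpleGraph.ConnectedComponent.mem_supp_iff, Finset.mem_coe,
        Finset.mem_filter, Finset.mem_univ, true_and, hT]
      constructor
      · rintro ⟨w, hw, rfl⟩
        exact ⟨w.2, hw⟩
      · rintro ⟨h1, h2⟩
        exact ⟨⟨v, h1⟩, h2, rfl⟩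
    calc Nat.card C.supp = C.supp.ncard := Nat.card_coe_set_eq _
      _ = (Subtype.val '' C.supp).ncard :=
          (Set.ncard_image_of_injective _ Subtype.val_injective).symm
      _ = (↑(T C) : Set V).ncard := by rw [himg]
      _ = (T C).card := Set.ncard_coe_finset _
  have key : (∑ C : H.ConnectedComponent, ((T C).card % k)) + S.card ≤ k * S.card + r := by
    rcases lt_trichotomy n k with hnk | hnk | hnk
    · have : r = n := Nat.mod_eq_of_lt hnk
      omega
    · rcases S.eq_empty_or_nonempty with hS | hS
      · subst hS
        have hr0 : r = 0 := by rw [hrdef, ← hnk]; exact Nat.mod_self n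
        have hGc := connected_of_isRP hG
        have hsub : (↑(Finset.univ : Finset V) : Set V) ⊆ ((↑(∅ : Finset V) : Set V)ᶜ) := by
          simp
        have hzero : ∀ C : H.ConnectedComponent, (T C).card % k = 0 := by
          intro C
          induction C using SimpleGraph.ConnectedComponent.ind with
          | _ x =>
            have hTuniv : T (H.connectedComponentMk x) = Finset.univ := by
              ext v
              simp only [Finset.mem_univ, iff_true]
              have hv : v ∈ ((↑(∅ : Finset V) : Set V)ᶜ) := by simp
              rw [hmemT]
              refine ⟨hv, ?_⟩
              rw [SimpleGraph.ConnectedComponent.eq]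
              have hre : (G.induce (↑(Finset.univ : Finset V) : Set V)).Reachable
                  ⟨v, by simp⟩ ⟨x.1, by simp⟩ := hGc.preconnected _ _
              have := reach_mono G hsub hre
              have e1 : (⟨v, hsub (by simp)⟩ : ↥((↑(∅ : Finset V) : Set V)ᶜ)) = ⟨v, hv⟩ :=
                Subtype.ext rfl
              have e2 : (⟨x.1, hsub (by simp)⟩ : ↥((↑(∅ : Finset V) : Set V)ᶜ)) = x :=
                Subtype.ext rfl
              rwa [e1, e2] at this
            rw [hTuniv]
            have : (Finset.univ : Finset V).card = n := by simp [hn]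
            rw [this, ← hnk, Nat.mod_self]
        rw [Finset.sum_eq_zero (fun C _ => hzero C)]
        simp
      · have hr0 : r = 0 := by rw [hrdef, ← hnk]; exact Nat.mod_self n
        have h1 : 1 ≤ S.card := Finset.card_pos.mpr hS
        have h2 : k ≤ k * S.card := Nat.le_mul_of_pos_right k h1
        omega
    · -- main case : k < n
      have hcardu : (Finset.univ : Finset V).card = n := by simp [hn]
      rw [SimpleGraph.IsRP] at hG
      rcases hG with h1 | ⟨-, hpart⟩
      · rw [hcardu] at h1; omega
      have hk0 : 0 < k := by omega
      have hrk : r < k := Nat.mod_lt _ hk0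
      set q := n / k with hq
      have hdm : k * q + r = n := Nat.div_add_mod n k
      have hdm' : q * k + r = n := by rw [mul_comm]; exact hdm
      have hq1 : 1 ≤ q := by
        rw [hq, Nat.le_div_iff_mul_le hk0]; omega
      set L : List ℕ := List.replicate q k ++ (if r = 0 then [] else [r]) with hL
      have hmemL : ∀ a ∈ L, a = k ∨ (a = r ∧ r ≠ 0) := by
        intro a ha
        rw [hL, List.mem_append] at ha
        rcases ha with ha | ha
        · exact Or.inl (List.eq_of_mem_replicate ha)
        · by_cases h : r = 0
          · rw [if_pos h] at ha; simp at ha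
          · rw [if_neg h] at ha; simp at ha; exact Or.inr ⟨ha, h⟩
      have hLpos : ∀ a ∈ L, 0 < a := by
        intro a ha; rcases hmemL a ha with h | ⟨h, h'⟩ <;> omega
      have hLlen : 2 ≤ L.length := by
        rw [hL, List.length_append, List.length_replicate]
        by_cases h : r = 0
        · rw [if_pos h]
          have hqne : q ≠ 1 := by
            intro hq1'
            rw [hq1', mul_one] at hdm
            omega
          simp only [List.length_nil]
          omega
        · rw [if_neg h]
          simp only [List.length_cons, List.length_nil]
          omega
      have hLsum : L.sum = (Finset.univ : Finset V).card := by
        rw [hcardu, hL, List.sum_append, List.sum_replicate, smul_eq_mul]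
        by_cases h : r = 0
        · rw [if_pos h]
          simp only [List.sum_nil]
          rw [h] at hdm'
          omega
        · rw [if_neg h]
          simp only [List.sum_cons, List.sum_nil]
          omega
      obtain ⟨P, hmap, hdisjL, hcover, hRPall⟩ := hpart L hLpos hLlen hLsum
      have hmemP : ∀ B ∈ P, B.card = k ∨ (B.card = r ∧ r ≠ 0) := by
        intro B hB
        have : B.card ∈ L := by rw [← hmap]; exact List.mem_map_of_mem (f := Finset.card) hB
        exact hmemL _ this
      have hBle : ∀ B ∈ P, B.card ≤ k := by
        intro B hB; rcases hmemP B hB with h | ⟨h, _⟩ <;> omega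
      have hBpos : ∀ B ∈ P, 0 < B.card := by
        intro B hB; rcases hmemP B hB with h | ⟨h, h'⟩ <;> omega
      have hBlt : ∀ B ∈ P, B.card < (Finset.univ : Finset V).card := by
        intro B hB; rw [hcardu]; have := hBle B hB; omega
      have hconnB : ∀ B ∈ P, (G.induce (↑B : Set V)).Connected :=
        fun B hB => connected_of_isRP (hRPall B hB (hBlt B hB))
      have hnodup : P.Nodup := by
        refine List.Pairwise.imp_of_mem ?_ hdisjL
        intro a b ha hb hab h
        subst h
        rw [disjoint_self] at hab
        have := hBpos a ha
        rw [hab] at this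
        simp at this
      set PF : Finset (Finset V) := P.toFinset with hPF
      have hmemPF : ∀ B, B ∈ PF ↔ B ∈ P := fun B => List.mem_toFinset
      have hPFdisj : ∀ B₁ ∈ PF, ∀ B₂ ∈ PF, B₁ ≠ B₂ → Disjoint B₁ B₂ := by
        intro B₁ h₁ B₂ h₂ hne
        exact hdisjL.forall ((hmemPF _).mp h₁) ((hmemPF _).mp h₂) hne
      have hcoverall : ∀ v : V, ∃ B ∈ PF, v ∈ B := by
        intro v
        have : v ∈ P.foldr (· ∪ ·) ∅ := by rw [hcover]; exact Finset.mem_univ v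
        obtain ⟨B, hB, hvB⟩ := (mem_foldr_union P).mp this
        exact ⟨B, (hmemPF B).mpr hB, hvB⟩
      have hsumPF : ∀ X : Finset V, ∑ B ∈ PF, (B ∩ X).card = X.card := by
        intro X
        have hU : PF.biUnion (fun B => B ∩ X) = X := by
          ext v
          simp only [Finset.mem_biUnion, Finset.mem_inter]
          constructor
          · rintro ⟨B, _, _, hvX⟩; exact hvX
          · intro hv
            obtain ⟨B, hB, hvB⟩ := hcoverall v
            exact ⟨B, hB, hvB, hv⟩
        calc ∑ B ∈ PF, (B ∩ X).card
            = (PF.biUnion (fun B => B ∩ X)).card := by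
              rw [Finset.card_biUnion]
              intro B₁ h₁ B₂ h₂ hne
              exact (hPFdisj B₁ h₁ B₂ h₂ hne).mono Finset.inter_subset_left
                Finset.inter_subset_left
          _ = X.card := by rw [hU]
      have hassign : ∀ B ∈ PF, (∀ v ∈ B, v ∉ S) → ∃ C, B ⊆ T C := by
        intro B hB hBS
        obtain ⟨v₀, hv₀⟩ := Finset.card_pos.mp (hBpos B ((hmemPF B).mp hB))
        have hsub : (↑B : Set V) ⊆ ((↑S : Set V)ᶜ) := by
          intro v hv
          simp only [Set.mem_compl_iff, Finset.mem_coe] at hv ⊢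
          exact hBS v hv
        have hv₀c : (v₀ : V) ∈ (↑B : Set V) := hv₀
        have hv₀' : v₀ ∈ ((↑S : Set V)ᶜ) := hsub hv₀c
        refine ⟨H.connectedComponentMk ⟨v₀, hv₀'⟩, ?_⟩
        intro v hv
        have hvc : (v : V) ∈ (↑B : Set V) := hv
        have hv' : v ∈ ((↑S : Set V)ᶜ) := hsub hvc
        rw [hmemT]
        refine ⟨hv', ?_⟩
        rw [SimpleGraph.ConnectedComponent.eq]
        have hre : (G.induce (↑B : Set V)).Reachable ⟨v, hvc⟩ ⟨v₀, hv₀c⟩ :=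
          ((hconnB B ((hmemPF B).mp hB)).preconnected) _ _
        exact reach_mono G hsub hre
      set bad : Finset (Finset V) :=
        PF.filter (fun B => (B ∩ S).Nonempty ∨ B.card ≠ k) with hbad
      have step1 : ∀ C, (T C).card % k ≤ ∑ B ∈ bad, (B ∩ T C).card := by
        intro C
        have hsplit := Finset.sum_filter_add_sum_filter_not PF
          (fun B => (B ∩ S).Nonempty ∨ B.card ≠ k) (fun B => (B ∩ T C).card)
        have hgood : k ∣ ∑ B ∈ PF.filter (fun B => ¬((B ∩ S).Nonempty ∨ B.card ≠ k)),
            (B ∩ T C).card := by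
          apply Finset.dvd_sum
          intro B hB
          rw [Finset.mem_filter] at hB
          obtain ⟨hBPF, hBgood⟩ := hB
          push_neg at hBgood
          obtain ⟨hBS, hBk⟩ := hBgood
          have hBS' : ∀ v ∈ B, v ∉ S := by
            intro v hv hvS
            exact (Finset.not_nonempty_iff_eq_empty.mpr hBS) ⟨v, Finset.mem_inter.mpr ⟨hv, hvS⟩⟩
          obtain ⟨C', hC'⟩ := hassign B hBPF hBS'
          by_cases hCC : C' = C
          · subst hCC
            rw [Finset.inter_eq_left.mpr hC', hBk]
          · have : B ∩ T C = ∅ := by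
              rw [← Finset.disjoint_iff_inter_eq_empty]
              exact (hTdisj C' C hCC).mono_left hC'
            rw [this]
            simp
        obtain ⟨m, hm⟩ := hgood
        have hTC : (T C).card = (∑ B ∈ bad, (B ∩ T C).card) + k * m := by
          rw [← hsumPF (T C), ← hsplit, hm, hbad]
        rw [hTC, Nat.add_mul_mod_self_left]
        exact Nat.mod_le _ _
      have step2 : ∀ B ∈ bad, (∑ C : H.ConnectedComponent, (B ∩ T C).card) = (B \ S).card := by
        intro B hB
        have hU : Finset.univ.biUnion (fun C => B ∩ T C) = B \ S := by
          ext v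
          simp only [Finset.mem_biUnion, Finset.mem_univ, true_and, Finset.mem_inter,
            Finset.mem_sdiff]
          constructor
          · rintro ⟨C, hvB, hvT⟩; exact ⟨hvB, hTS v C hvT⟩
          · rintro ⟨hvB, hvS⟩
            have hv' : v ∈ ((↑S : Set V)ᶜ) := by simpa using hvS
            exact ⟨H.connectedComponentMk ⟨v, hv'⟩, hvB, (hmemT _ _).mpr ⟨hv', rfl⟩⟩
        calc (∑ C : H.ConnectedComponent, (B ∩ T C).card)
            = (Finset.univ.biUnion (fun C => B ∩ T C)).card := by
              rw [Finset.card_biUnion]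
              intro C h₁ D h₂ hne
              exact (hTdisj C D hne).mono Finset.inter_subset_right Finset.inter_subset_right
          _ = (B \ S).card := by rw [hU]
      -- split bad into parts meeting S and small parts
      set bad1 : Finset (Finset V) := PF.filter (fun B => (B ∩ S).Nonempty) with hbad1
      set bad2 : Finset (Finset V) :=
        PF.filter (fun B => ¬(B ∩ S).Nonempty ∧ B.card ≠ k) with hbad2
      have hbadsplit : bad = bad1 ∪ bad2 := by
        ext B
        simp only [hbad, hbad1, hbad2, Finset.mem_filter, Finset.mem_union]
        tauto
      have hdisj12 : Disjoint bad1 bad2 := by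
        rw [Finset.disjoint_left]
        intro B h₁ h₂
        rw [hbad1, Finset.mem_filter] at h₁
        rw [hbad2, Finset.mem_filter] at h₂
        exact h₂.2.1 h₁.2
      have hinterS : ∑ B ∈ bad1, (B ∩ S).card = S.card := by
        have h0 : ∑ B ∈ PF.filter (fun B => ¬(B ∩ S).Nonempty), (B ∩ S).card = 0 := by
          apply Finset.sum_eq_zero
          intro B hB
          rw [Finset.mem_filter] at hB
          rw [Finset.not_nonempty_iff_eq_empty.mp hB.2]
          simp
        have hs := Finset.sum_filter_add_sum_filter_not PF
          (fun B => (B ∩ S).Nonempty) (fun B => (B ∩ S).card)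
        rw [h0, add_zero, hsumPF S] at hs
        exact hs
      have hcard1 : bad1.card ≤ S.card := by
        calc bad1.card = ∑ _B ∈ bad1, 1 := by simp
          _ ≤ ∑ B ∈ bad1, (B ∩ S).card := by
              apply Finset.sum_le_sum
              intro B hB
              exact Finset.card_pos.mpr (Finset.mem_filter.mp hB).2
          _ = S.card := hinterS
      have hsum1 : ∑ B ∈ bad1, B.card ≤ k * bad1.card := by
        calc ∑ B ∈ bad1, B.card ≤ ∑ _B ∈ bad1, k := by
              apply Finset.sum_le_sum
              intro B hB
              exact hBle B ((hmemPF B).mp (Finset.mem_filter.mp hB).1)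
          _ = bad1.card * k := by rw [Finset.sum_const, smul_eq_mul]
          _ = k * bad1.card := mul_comm _ _
      have bound1 : (∑ B ∈ bad1, (B \ S).card) + S.card ≤ k * S.card := by
        have e : (∑ B ∈ bad1, (B \ S).card) + (∑ B ∈ bad1, (B ∩ S).card)
            = ∑ B ∈ bad1, B.card := by
          rw [← Finset.sum_add_distrib]
          exact Finset.sum_congr rfl (fun B _ => Finset.card_sdiff_add_card_inter B S)
        have hmono : k * bad1.card ≤ k * S.card := Nat.mul_le_mul_left k hcard1
        omega
      -- at most one small part
      have hcount : (PF.filter (fun B => B.card ≠ k)).card ≤ 1 := by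
        have e1 : (PF.filter (fun B => B.card ≠ k)).card
            = P.countP (fun B => decide (B.card ≠ k)) := by
          have e0 : PF.filter (fun B => B.card ≠ k)
              = PF.filter (fun B => (decide (B.card ≠ k) : Bool)) := by
            apply Finset.filter_congr
            intro B _
            simp
          rw [e0, hPF, ← List.toFinset_filter, List.toFinset_card_of_nodup (hnodup.filter _),
            List.countP_eq_length_filter]
        have e2 : P.countP (fun B => decide (B.card ≠ k))
            = L.countP (fun a => decide (a ≠ k)) := by
          rw [← hmap, List.countP_map]; rfl
        have e3 : (List.replicate q k).countP (fun a => decide (a ≠ k)) = 0 := by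
          rw [List.countP_eq_zero]
          intro a ha
          simpa using List.eq_of_mem_replicate ha
        have e4 : (if r = 0 then ([] : List ℕ) else [r]).countP
            (fun a => decide (a ≠ k)) ≤ 1 := by
          split_ifs
          · simp
          · exact List.countP_le_length
        rw [e1, e2, hL, List.countP_append]
        omega
      have bound2 : (∑ B ∈ bad2, (B \ S).card) ≤ r := by
        have hb2sub : bad2 ⊆ PF.filter (fun B => B.card ≠ k) := by
          rw [hbad2]
          exact Finset.monotone_filter_right PF (fun B _ hB => hB.2)
        have hb2card : bad2.card ≤ 1 := le_trans (Finset.card_le_card hb2sub) hcount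
        calc (∑ B ∈ bad2, (B \ S).card) ≤ ∑ _B ∈ bad2, r := by
              apply Finset.sum_le_sum
              intro B hB
              have hBk : B.card ≠ k := (Finset.mem_filter.mp hB).2.2
              have hBP : B ∈ P := (hmemPF B).mp (Finset.mem_filter.mp hB).1
              have hBr : B.card = r := by rcases hmemP B hBP with h | ⟨h, _⟩ <;> omega
              calc (B \ S).card ≤ B.card := Finset.card_le_card (Finset.sdiff_subset)
                _ = r := hBr
          _ = bad2.card * r := by rw [Finset.sum_const, smul_eq_mul]
          _ ≤ 1 * r := Nat.mul_le_mul_right r hb2card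
          _ = r := one_mul r
      -- assemble
      have m1 : (∑ C : H.ConnectedComponent, ((T C).card % k))
          ≤ ∑ C : H.ConnectedComponent, ∑ B ∈ bad, (B ∩ T C).card :=
        Finset.sum_le_sum (fun C _ => step1 C)
      have m2 : (∑ C : H.ConnectedComponent, ∑ B ∈ bad, (B ∩ T C).card)
          = ∑ B ∈ bad, ∑ C : H.ConnectedComponent, (B ∩ T C).card := Finset.sum_comm
      have m3 : (∑ B ∈ bad, ∑ C : H.ConnectedComponent, (B ∩ T C).card)
          = ∑ B ∈ bad, (B \ S).card := Finset.sum_congr rfl step2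
      have m4 : (∑ B ∈ bad, (B \ S).card)
          = (∑ B ∈ bad1, (B \ S).card) + ∑ B ∈ bad2, (B \ S).card := by
        rw [hbadsplit, Finset.sum_union hdisj12]
      omega
  -- conclude over ℚ
  have hk1 : (0 : ℚ) < (k : ℚ) - 1 := by
    have : (2 : ℚ) ≤ (k : ℚ) := by exact_mod_cast hk
    linarith
  rw [finsum_eq_sum_of_fintype]
  simp only [hcard]
  have hQ : (∑ C : H.ConnectedComponent, (((T C).card % k : ℕ) : ℚ))
      ≤ ((k : ℚ) - 1) * S.card + r := by
    have h2 : ((∑ C : H.ConnectedComponent, ((T C).card % k) : ℕ) : ℚ) + S.card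
        ≤ (k : ℚ) * S.card + r := by exact_mod_cast key
    push_cast at h2 ⊢
    linarith
  calc (1 / ((k : ℚ) - 1)) * ∑ C : H.ConnectedComponent, (((T C).card % k : ℕ) : ℚ)
      ≤ (1 / ((k : ℚ) - 1)) * (((k : ℚ) - 1) * S.card + r) := by
        apply mul_le_mul_of_nonneg_left hQ
        positivity
    _ = (S.card : ℚ) + (r : ℚ) / ((k : ℚ) - 1) := by
        field_simp
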